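/- Let K be a field of characteristic zero and P_n = K[x_1,…,x_n]. For any nonzero element a of K, any index i, and any polynomial g ∈ P_n, there exists a polynomial f ∈ P_n such that g(x_1,…,x_i,…,x_n) = f(x_1,…,x_i + a,…,x_n) − f(x_1,…,x_i,…,x_n); that is, g = σ(f) − f, where σ is the K-algebra endomorphism of P_n sending x_i to x_i + a and fixing all other variables. -/

import Mathlib

open MvPolynomial Finset

/-- **Statement 1.** For any nonzero `a : K`, any index `i`, and any polynomial
`g ∈ K[x_1,…,x_n]`, there is a polynomial `f` with `g = σ(f) - f`, where `σ` is the
`K`-algebra endomorphism of `K[x_1,…,x_n]` sending `x_i` to `x_i + a` and fixing the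
other variables. -/
theorem bardakov_lemma2_polynomial (K : Type*) [Field K] [CharZero K] (n : ℕ)
    (a : K) (ha : a ≠ 0) (i : Fin n) (g : MvPolynomial (Fin n) K) :
    ∃ f : MvPolynomial (Fin n) K,
      g = (aeval (fun j : Fin n => if j = i then X j + C a else X j)) f - f := by
  set σ : Fin n → MvPolynomial (Fin n) K := fun j => if j = i then X j + C a else X j with hσ
  set L : MvPolynomial (Fin n) K →ₗ[K] MvPolynomial (Fin n) K :=
    (aeval σ).toLinearMap - LinearMap.id with hL
  have hLapp : ∀ p, L p = aeval σ p - p := fun p => rfl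
  suffices h : g ∈ LinearMap.range L by
    obtain ⟨f, hf⟩ := h
    refine ⟨f, ?_⟩
    rw [← hf, hLapp]
  -- powers of X i are in the range
  have hpow : ∀ k : ℕ, (X i : MvPolynomial (Fin n) K) ^ k ∈ LinearMap.range L := by
    intro k
    induction k using Nat.strong_induction_on with
    | _ k ih =>
      have hL1 : L (X i ^ (k+1)) = (X i + C a)^(k+1) - X i ^ (k+1) := by
        rw [hLapp, map_pow, aeval_X, hσ]
        simp
      have hbin : (X i + C a : MvPolynomial (Fin n) K)^(k+1)
          = ∑ j ∈ range (k+2), X i ^ j * C a ^ (k+1-j) * ((k+1).choose j : MvPolynomial (Fin n) K) := by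
        rw [add_pow]
      have hterm : ∀ j : ℕ, (X i : MvPolynomial (Fin n) K) ^ j * C a ^ (k+1-j) *
          ((k+1).choose j : MvPolynomial (Fin n) K)
          = (a^(k+1-j) * ((k+1).choose j : K)) • X i ^ j := by
        intro j
        rw [smul_eq_C_mul, map_mul, map_pow, ← map_natCast (C : K →+* MvPolynomial (Fin n) K)]
        ring
      have hsum : L (X i ^ (k+1))
          = (∑ j ∈ range k, (a^(k+1-j) * ((k+1).choose j : K)) • X i ^ j)
            + (((k+1 : K)) * a) • X i ^ k := by
        rw [hL1, hbin, sum_range_succ, sum_range_succ]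
        simp only [hterm, Nat.sub_self, pow_zero, Nat.choose_self, Nat.cast_one, mul_one,
          one_mul, one_smul, Nat.add_sub_cancel_left, pow_one, Nat.choose_succ_self_right,
          add_sub_cancel_right]
        congr 1
        rw [smul_eq_C_mul]
        push_cast [map_mul, map_add, map_one, map_natCast]
        ring
      have hc : ((k+1 : K)) * a ≠ 0 := by
        exact mul_ne_zero (Nat.cast_add_one_ne_zero k) ha
      have hmem : (((k+1 : K)) * a) • (X i : MvPolynomial (Fin n) K) ^ k ∈ LinearMap.range L := by
        have h1 : L (X i ^ (k+1)) - (∑ j ∈ range k, (a^(k+1-j) * ((k+1).choose j : K)) • X i ^ j)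
            = (((k+1 : K)) * a) • X i ^ k := by rw [hsum]; ring
        rw [← h1]
        exact Submodule.sub_mem _ (LinearMap.mem_range_self L _)
          (Submodule.sum_mem _ fun j hj => Submodule.smul_mem _ _ (ih j (mem_range.mp hj)))
      have := Submodule.smul_mem (LinearMap.range L) (((k+1 : K)) * a)⁻¹ hmem
      rwa [smul_smul, inv_mul_cancel₀ hc, one_smul] at this
  -- σ fixes polynomials not involving x_i
  have hfix : ∀ (d : Fin n →₀ ℕ) (c : K), d i = 0 →
      aeval σ (monomial d c) = monomial d c := by
    intro d c hd
    rw [monomial_eq, map_mul, algHom_C]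
    congr 1
    rw [map_finsuppProd]
    refine Finsupp.prod_congr fun j hj => ?_
    have hji : j ≠ i := fun h => by
      rw [h] at hj; exact absurd hd (Finsupp.mem_support_iff.mp hj)
    rw [map_pow, aeval_X, hσ]
    simp [hji]
  -- every monomial is in range
  have hmono : ∀ (d : Fin n →₀ ℕ) (c : K), monomial d c ∈ LinearMap.range L := by
    intro d c
    obtain ⟨f, hf⟩ := hpow (d i)
    refine ⟨monomial (d.erase i) c * f, ?_⟩
    rw [hLapp, map_mul, hfix _ _ (Finsupp.erase_same), ← mul_sub, ← hLapp, hf]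
    rw [X_pow_eq_monomial, monomial_mul, Finsupp.erase_add_single, mul_one]
  rw [MvPolynomial.as_sum g]
  exact Submodule.sum_mem _ fun d hd => hmono d (coeff d g)
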